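/- Under SDHT with initial beliefs satisfying b^l_{i,0}(θ) > 0 and b^a_{i,0}(θ) > 0 for every hypothesis θ ∈ Θ and every agent i, for every good agent i ∈ G it holds almost surely that b^a_{i,t}(θ*) > 0 for every t ∈ ℕ, for every choice of the bad agents' shared values. -/

import Mathlib

open MeasureTheory Filter

/-- Kullback–Leibler divergence between two probability vectors on a finite set. -/
noncomputable def klDivFin {S : Type*} [Fintype S] (p r : S → ℝ) : ℝ :=
  ∑ s, if 0 < p s then p s * Real.log (p s / r s) else 0

/-- **Positivity of the actual belief on the true hypothesis under SDHT (Lemma 2).**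
Under the SDHT setting and update rule (see the hypotheses: Bayesian local update; case one for
`(i,θ)` at time `t` iff `|Spair θ θ' ∩ Nbr i t| ≥ 2f+1` for every `θ' ≠ θ`, in which case the `f`
lowest shared values are removed and the minimum of the remaining shared values and the local
belief is taken; otherwise the minimum of the previous actual belief and the new local belief is
taken; then the result is normalized), with initial local and actual beliefs positive on every
hypothesis for every agent, for every good agent `i ∈ G` it holds almost surely that
`b^a_{i,t}(θ*) > 0` for every `t ∈ ℕ`, for every choice of the bad agents' shared values. -/
theorem sdht_actual_belief_true_pos
    -- agents
    {𝒩 : Type*} [Fintype 𝒩] [DecidableEq 𝒩]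
    (G : Finset 𝒩) (f : ℕ)
    -- hypotheses
    {Θ : Type*} [Fintype Θ] [Nonempty Θ] (θstar : Θ)
    -- states
    {Q : Type*} [Fintype Q]
    -- observations
    {Obs : 𝒩 → Type*} [∀ i, Fintype (Obs i)]
    [∀ i, MeasurableSpace (Obs i)] [∀ i, MeasurableSingletonClass (Obs i)]
    -- likelihood functions and state paths
    (l : (i : 𝒩) → Θ → Q → Obs i → ℝ)
    (q : 𝒩 → ℕ → Q)
    (hl_nonneg : ∀ i ∈ G, ∀ θ qq s, 0 ≤ l i θ qq s)
    (hl_sum : ∀ i ∈ G, ∀ θ qq, ∑ s, l i θ qq s = 1)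
    -- probability space and observations of the good agents
    {Ω : Type*} [MeasurableSpace Ω] (P : Measure Ω) [IsProbabilityMeasure P]
    (obs : (i : 𝒩) → ℕ → Ω → Obs i)
    (hobs_meas : ∀ i ∈ G, ∀ t, 1 ≤ t → Measurable (obs i t))
    (hobs_law : ∀ i ∈ G, ∀ t, 1 ≤ t → ∀ s,
      P {ω | obs i t ω = s} = ENNReal.ofReal (l i θstar (q i t) s))
    (hobs_indep : ProbabilityTheory.iIndepFun
      (fun p : {p : 𝒩 × ℕ // p.1 ∈ G ∧ 1 ≤ p.2} => obs p.1.1 p.1.2) P)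
    -- source-agent sets
    (Spair : Θ → Θ → Set 𝒩)
    (hSpair : ∀ θ θ', Spair θ θ' =
      {i : 𝒩 | {t : ℕ | 0 < klDivFin (l i θ (q i t)) (l i θ' (q i t))}.Infinite})
    -- time-varying neighbor map, with at most `f` bad neighbors of a good agent
    (Nbr : 𝒩 → ℕ → Finset 𝒩)
    (hNbr_self : ∀ i t, i ∈ Nbr i t)
    (hNbr_bad : ∀ i ∈ G, ∀ t, ((Nbr i t : Set 𝒩) \ (G : Set 𝒩)).ncard ≤ f)
    -- the (deterministic) case-one predicate
    (CaseOne : 𝒩 → ℕ → Θ → Prop)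
    (hCaseOne : ∀ i t θ, CaseOne i t θ ↔
      ∀ θ' ≠ θ, 2 * f + 1 ≤ (Spair θ θ' ∩ (Nbr i t : Set 𝒩)).ncard)
    -- arbitrary shared values of the bad agents (Byzantine adversary model)
    (badShare : 𝒩 → ℕ → Θ → Ω → ℝ)
    (hbad_meas : ∀ j t θ, Measurable (badShare j t θ))
    (hbad_mem : ∀ j t θ ω, badShare j t θ ω ∈ Set.Icc (0 : ℝ) 1)
    -- local beliefs, actual beliefs, pre-normalization actual beliefs, shared values
    (bl ba btilde : 𝒩 → ℕ → Θ → Ω → ℝ)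
    (share : 𝒩 → ℕ → Θ → Ω → ℝ)
    (hshare : ∀ j t θ ω,
      share j t θ ω = if j ∈ G then ba j t θ ω else badShare j t θ ω)
    -- initialization: deterministic probability vectors
    (b0l b0a : 𝒩 → Θ → ℝ)
    (hbl_init : ∀ i ∈ G, ∀ θ ω, bl i 0 θ ω = b0l i θ)
    (hba_init : ∀ i ∈ G, ∀ θ ω, ba i 0 θ ω = b0a i θ)
    (hb0l_sum : ∀ i ∈ G, ∑ θ, b0l i θ = 1)
    (hb0a_sum : ∀ i ∈ G, ∑ θ, b0a i θ = 1)
    -- (i) local Bayesian update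
    (hbl_upd : ∀ i ∈ G, ∀ t θ ω,
      bl i (t + 1) θ ω =
        l i θ (q i (t + 1)) (obs i (t + 1) ω) * bl i t θ ω /
          ∑ θ', l i θ' (q i (t + 1)) (obs i (t + 1) ω) * bl i t θ' ω)
    -- (ii) case one: trim the `f` lowest shared values, take the minimum of the rest
    (Rsel : 𝒩 → ℕ → Θ → Ω → Finset 𝒩)
    (hcase1 : ∀ i ∈ G, ∀ t θ ω, CaseOne i (t + 1) θ →
      Rsel i (t + 1) θ ω ⊆ Nbr i (t + 1) ∧
      (Rsel i (t + 1) θ ω).card = (Nbr i (t + 1)).card - f ∧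
      (∀ j ∈ Nbr i (t + 1), j ∉ Rsel i (t + 1) θ ω →
        ∀ r ∈ Rsel i (t + 1) θ ω, share j t θ ω ≤ share r t θ ω) ∧
      btilde i (t + 1) θ ω =
        sInf (insert (bl i (t + 1) θ ω)
          ((fun j => share j t θ ω) '' (Rsel i (t + 1) θ ω : Set 𝒩))))
    -- (ii) case two
    (hcase2 : ∀ i ∈ G, ∀ t θ ω, ¬ CaseOne i (t + 1) θ →
      btilde i (t + 1) θ ω = min (ba i t θ ω) (bl i (t + 1) θ ω))
    -- (iii) normalization
    (hnorm : ∀ i ∈ G, ∀ t θ ω,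
      ba i (t + 1) θ ω = btilde i (t + 1) θ ω / ∑ θ', btilde i (t + 1) θ' ω)
    -- theorem hypothesis (1): positive initial beliefs
    (hinit_pos : ∀ i θ, 0 < b0l i θ ∧ 0 < b0a i θ)
 :
    ∀ i ∈ G, ∀ᵐ ω ∂P, ∀ t : ℕ, 0 < ba i t θstar ω := by
  classical
  -- Step 1: almost surely, every good agent's observation at every time t ≥ 1 has
  -- positive likelihood under the true hypothesis.
  have hnull : ∀ (j : 𝒩) (t : ℕ), j ∈ G → 1 ≤ t →
      P {ω | ¬ 0 < l j θstar (q j t) (obs j t ω)} = 0 := by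
    intro j t hj ht
    have hsub : {ω | ¬ 0 < l j θstar (q j t) (obs j t ω)} ⊆
        ⋃ s : Obs j, {ω | obs j t ω = s ∧ l j θstar (q j t) s ≤ 0} := by
      intro ω hω
      exact Set.mem_iUnion.2 ⟨obs j t ω, rfl, le_of_not_gt hω⟩
    refine measure_mono_null hsub (measure_iUnion_null fun s => ?_)
    by_cases hs : l j θstar (q j t) s ≤ 0
    · have h1 : {ω | obs j t ω = s ∧ l j θstar (q j t) s ≤ 0} ⊆ {ω | obs j t ω = s} :=
        fun ω hω => hω.1
      refine measure_mono_null h1 ?_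
      rw [hobs_law j hj t ht s]
      exact ENNReal.ofReal_eq_zero.2 hs
    · have : {ω | obs j t ω = s ∧ l j θstar (q j t) s ≤ 0} = (∅ : Set Ω) := by
        ext ω; simp [hs]
      simp [this]
  have hAE : ∀ᵐ ω ∂P, ∀ (j : 𝒩) (t : ℕ), j ∈ G → 1 ≤ t →
      0 < l j θstar (q j t) (obs j t ω) := by
    rw [ae_all_iff]
    intro j
    rw [ae_all_iff]
    intro t
    by_cases hj : j ∈ G
    · by_cases ht : 1 ≤ t
      · have := hnull j t hj ht
        filter_upwards [measure_eq_zero_iff_ae_notMem.mp this] with ω hω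
        intro _ _
        exact not_not.mp hω
      · exact Filter.Eventually.of_forall fun ω _ ht' => absurd ht' ht
    · exact Filter.Eventually.of_forall fun ω hj' => absurd hj' hj
  intro i hi
  filter_upwards [hAE] with ω hω
  -- Step 2: pointwise induction on t, simultaneously for all good agents.
  have key : ∀ t : ℕ, ∀ j ∈ G,
      (∀ θ, 0 ≤ bl j t θ ω ∧ 0 ≤ ba j t θ ω) ∧
      0 < bl j t θstar ω ∧ 0 < ba j t θstar ω := by
    intro t
    induction t with
    | zero =>
      intro j hj
      refine ⟨fun θ => ?_, ?_, ?_⟩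
      · rw [hbl_init j hj θ ω, hba_init j hj θ ω]
        exact ⟨(hinit_pos j θ).1.le, (hinit_pos j θ).2.le⟩
      · rw [hbl_init j hj θstar ω]; exact (hinit_pos j θstar).1
      · rw [hba_init j hj θstar ω]; exact (hinit_pos j θstar).2
    | succ t ih =>
      intro j hj
      -- shared values are nonnegative, and positive for good agents at θstar
      have hshare_nonneg : ∀ (k : 𝒩) (θ : Θ), 0 ≤ share k t θ ω := by
        intro k θ
        rw [hshare]
        by_cases hk : k ∈ G
        · simp only [hk, if_true]; exact ((ih k hk).1 θ).2
        · simp only [hk, if_false]; exact (hbad_mem k t θ ω).1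
      have hshare_posG : ∀ k ∈ G, 0 < share k t θstar ω := by
        intro k hk
        rw [hshare]
        simp only [hk, if_true]
        exact (ih k hk).2.2
      -- local belief facts at time t+1
      have hbl_nonneg : ∀ θ, 0 ≤ bl j (t + 1) θ ω := by
        intro θ
        rw [hbl_upd j hj t θ ω]
        refine div_nonneg (mul_nonneg (hl_nonneg j hj θ _ _) ((ih j hj).1 θ).1) ?_
        exact Finset.sum_nonneg fun θ' _ =>
          mul_nonneg (hl_nonneg j hj θ' _ _) ((ih j hj).1 θ').1
      have hbl_pos : 0 < bl j (t + 1) θstar ω := by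
        rw [hbl_upd j hj t θstar ω]
        have hnum : 0 < l j θstar (q j (t + 1)) (obs j (t + 1) ω) * bl j t θstar ω :=
          mul_pos (hω j (t + 1) hj (Nat.le_add_left 1 t)) (ih j hj).2.1
        refine div_pos hnum (lt_of_lt_of_le hnum ?_)
        exact Finset.single_le_sum
          (fun θ' _ => mul_nonneg (hl_nonneg j hj θ' _ _) ((ih j hj).1 θ').1)
          (Finset.mem_univ θstar)
      -- pre-normalization values at time t+1
      have hbt_nonneg : ∀ θ, 0 ≤ btilde j (t + 1) θ ω := by
        intro θ
        by_cases hc : CaseOne j (t + 1) θ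
        · obtain ⟨_, _, _, heq⟩ := hcase1 j hj t θ ω hc
          rw [heq]
          refine le_csInf ⟨_, Set.mem_insert _ _⟩ ?_
          rintro b (rfl | ⟨k, _, rfl⟩)
          · exact hbl_nonneg θ
          · exact hshare_nonneg k θ
        · rw [hcase2 j hj t θ ω hc]
          exact le_min ((ih j hj).1 θ).2 (hbl_nonneg θ)
      have hbt_pos : 0 < btilde j (t + 1) θstar ω := by
        by_cases hc : CaseOne j (t + 1) θstar
        · obtain ⟨hRsub, hRcard, htrim, heq⟩ := hcase1 j hj t θstar ω hc
          set R := Rsel j (t + 1) θstar ω with hR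
          -- every selected shared value is positive
          have hpos : ∀ k ∈ R, 0 < share k t θstar ω := by
            intro k hk
            by_contra hnk
            have hk0 : share k t θstar ω = 0 :=
              le_antisymm (le_of_not_gt hnk) (hshare_nonneg k θstar)
            have hkbad : k ∉ G := fun hkG =>
              absurd hk0 (ne_of_gt (hshare_posG k hkG))
            -- all trimmed agents are bad
            have hremoved_bad : ∀ j' ∈ Nbr j (t + 1) \ R, j' ∉ G := by
              intro j' hj'
              rw [Finset.mem_sdiff] at hj'
              intro hj'G
              have h1 : share j' t θstar ω ≤ share k t θstar ω :=
                htrim j' hj'.1 hj'.2 k hk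
              rw [hk0] at h1
              exact absurd (le_antisymm h1 (hshare_nonneg j' θstar)).symm
                (ne_of_gt (hshare_posG j' hj'G)).symm
            -- counting
            have hflt : f < (Nbr j (t + 1)).card := by
              have h1 : 0 < R.card := Finset.card_pos.2 ⟨k, hk⟩
              rw [hRcard] at h1
              omega
            have hcard_sdiff : (Nbr j (t + 1) \ R).card = f := by
              rw [Finset.card_sdiff_of_subset hRsub, hRcard]
              omega
            have hknot : k ∉ Nbr j (t + 1) \ R := by
              simp [Finset.mem_sdiff, hk]
            have hTcard : (insert k (Nbr j (t + 1) \ R)).card = f + 1 := by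
              rw [Finset.card_insert_of_notMem hknot, hcard_sdiff]
            have hTsub : ((insert k (Nbr j (t + 1) \ R) : Finset 𝒩) : Set 𝒩) ⊆
                (Nbr j (t + 1) : Set 𝒩) \ (G : Set 𝒩) := by
              intro x hx
              simp only [Finset.coe_insert, Set.mem_insert_iff, Finset.mem_coe] at hx
              rcases hx with rfl | hx
              · exact ⟨hRsub hk, fun hxG => hkbad (Finset.mem_coe.mp hxG)⟩
              · rw [Finset.mem_sdiff] at hx
                exact ⟨hx.1, fun hxG => hremoved_bad x (Finset.mem_sdiff.2 hx)
                  (Finset.mem_coe.mp hxG)⟩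
            have hle : f + 1 ≤ ((Nbr j (t + 1) : Set 𝒩) \ (G : Set 𝒩)).ncard := by
              calc f + 1 = ((insert k (Nbr j (t + 1) \ R) : Finset 𝒩) : Set 𝒩).ncard := by
                    rw [Set.ncard_coe_finset, hTcard]
                _ ≤ _ := Set.ncard_le_ncard hTsub (Set.toFinite _)
            have := hNbr_bad j hj (t + 1)
            omega
          rw [heq]
          have hfin : (insert (bl j (t + 1) θstar ω)
              ((fun k => share k t θstar ω) '' (R : Set 𝒩))).Finite :=
            (R.finite_toSet.image _).insert _
          have hne : (insert (bl j (t + 1) θstar ω)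
              ((fun k => share k t θstar ω) '' (R : Set 𝒩))).Nonempty :=
            ⟨_, Set.mem_insert _ _⟩
          have hmem := hne.csInf_mem hfin
          rcases hmem with hmem | ⟨k, hk, hkeq⟩
          · rw [hmem]; exact hbl_pos
          · rw [← hkeq]; exact hpos k hk
        · rw [hcase2 j hj t θstar ω hc]
          exact lt_min (ih j hj).2.2 hbl_pos
      -- normalization
      have hsum_pos : 0 < ∑ θ', btilde j (t + 1) θ' ω :=
        Finset.sum_pos' (fun θ' _ => hbt_nonneg θ')
          ⟨θstar, Finset.mem_univ _, hbt_pos⟩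
      refine ⟨fun θ => ⟨hbl_nonneg θ, ?_⟩, hbl_pos, ?_⟩
      · rw [hnorm j hj t θ ω]
        exact div_nonneg (hbt_nonneg θ) hsum_pos.le
      · rw [hnorm j hj t θstar ω]
        exact div_pos hbt_pos hsum_pos
  intro t
  exact (key t i hi).2.2
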